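/- Leibniz rule for h-exponential divided differences: for functions f, g : ℝ → ℂ and nodes x_0, …, x_m with e_h^{ix_j} pairwise distinct, [x_0,…,x_m]_e (f·g) = ∑_{k=0}^m [x_0,…,x_k]_e f · [x_k,…,x_m]_e g. -/

import Mathlib

noncomputable def eh (h z : ℝ) : ℂ := Complex.exp (Complex.I * z * (Real.log (1 + h) / h))

noncomputable def dd (h : ℝ) (f : ℝ → ℂ) : (n : ℕ) → (Fin (n + 1) → ℝ) → ℂ
  | 0, x => f (x 0)
  | n + 1, x =>
      (dd h f n (fun i => x i.succ) - dd h f n (fun i => x i.castSucc)) /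
        (eh h (x (Fin.last (n + 1))) - eh h (x 0))

/-- ℕ-indexed divided difference over nodes `y a, …, y (a+n)` with values `F`. -/
noncomputable def ddN (y F : ℕ → ℂ) : ℕ → ℕ → ℂ
  | a, 0 => F a
  | a, n + 1 => (ddN y F (a + 1) n - ddN y F a n) / (y (a + n + 1) - y a)

lemma ddN_zero (y F : ℕ → ℂ) (a : ℕ) : ddN y F a 0 = F a := rfl

lemma ddN_succ (y F : ℕ → ℂ) (a n : ℕ) :
    ddN y F a (n + 1) = (ddN y F (a + 1) n - ddN y F a n) / (y (a + n + 1) - y a) := rfl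

lemma ddN_R1 (y F : ℕ → ℂ) (a n : ℕ) (hy : y (a + n + 1) ≠ y a) :
    ddN y F (a + 1) n = ddN y F a n + (y (a + n + 1) - y a) * ddN y F a (n + 1) := by
  rw [ddN_succ, mul_div_cancel₀ _ (sub_ne_zero_of_ne hy)]
  ring

lemma ddN_R2 (y F : ℕ → ℂ) (a n : ℕ) (hy : y (a + n + 1) ≠ y a) :
    ddN y F a n = ddN y F (a + 1) n - (y (a + n + 1) - y a) * ddN y F a (n + 1) := by
  rw [ddN_R1 y F a n hy]; ring

lemma ddN_leibniz (y F G : ℕ → ℂ) :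
    ∀ n a, (∀ i j, a ≤ i → i < j → j ≤ a + n → y i ≠ y j) →
      ddN y (fun t => F t * G t) a n
        = ∑ k ∈ Finset.range (n + 1), ddN y F a k * ddN y G (a + k) (n - k) := by
  intro n
  induction n with
  | zero => intro a _; simp [ddN]
  | succ n ih =>
    intro a hy
    have hd : y (a + n + 1) - y a ≠ 0 :=
      sub_ne_zero_of_ne (hy a (a + n + 1) le_rfl (by omega) (by omega)).symm
    rw [ddN_succ, ih (a + 1) (fun i j h1 h2 h3 => hy i j (by omega) h2 (by omega)),
      ih a (fun i j h1 h2 h3 => hy i j h1 h2 (by omega)), div_eq_iff hd]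
    set T : ℕ → ℂ := fun k => ddN y F a k * ddN y G (a + k) (n + 1 - k) with hT
    have key : ∀ k ∈ Finset.range (n + 1),
        ddN y F (a + 1) k * ddN y G (a + 1 + k) (n - k)
          - ddN y F a k * ddN y G (a + k) (n - k)
        = (y (a + (k + 1)) - y a) * T (k + 1) + (y (a + n + 1) - y (a + k)) * T k := by
      intro k hk
      have hkn : k ≤ n := Nat.lt_succ_iff.mp (Finset.mem_range.mp hk)
      have h1 : y (a + k + 1) ≠ y a :=
        (hy a (a + k + 1) le_rfl (by omega) (by omega)).symm
      have h2 : y (a + k + (n - k) + 1) ≠ y (a + k) :=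
        (hy (a + k) (a + k + (n - k) + 1) (by omega) (by omega) (by omega)).symm
      simp only [hT]
      rw [ddN_R1 y F a k h1, ddN_R2 y G (a + k) (n - k) h2,
        show a + k + (n - k) + 1 = a + n + 1 from by omega,
        show n - k + 1 = n + 1 - k from by omega,
        show a + 1 + k = a + (k + 1) from by omega,
        show a + k + 1 = a + (k + 1) from by omega,
        show n - k = n + 1 - (k + 1) from by omega]
      ring
    rw [← Finset.sum_sub_distrib, Finset.sum_congr rfl key, Finset.sum_add_distrib]
    have hB : ∑ k ∈ Finset.range (n + 1), (y (a + (k + 1)) - y a) * T (k + 1)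
        = ∑ k ∈ Finset.range (n + 2), (y (a + k) - y a) * T k := by
      rw [Finset.sum_range_succ' (fun k => (y (a + k) - y a) * T k) (n + 1)]
      simp
    have hC : ∑ k ∈ Finset.range (n + 1), (y (a + n + 1) - y (a + k)) * T k
        = ∑ k ∈ Finset.range (n + 2), (y (a + n + 1) - y (a + k)) * T k := by
      rw [Finset.sum_range_succ (fun k => (y (a + n + 1) - y (a + k)) * T k) (n + 1),
        show a + (n + 1) = a + n + 1 from by omega]
      simp
    rw [hB, hC, ← Finset.sum_add_distrib, Finset.sum_mul]
    refine Finset.sum_congr rfl ?_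
    intro k _
    simp only [hT]
    ring

lemma dd_eq_ddN (h : ℝ) (f : ℝ → ℂ) (X : ℕ → ℝ) :
    ∀ n a (w : Fin (n + 1) → ℝ), (∀ i : Fin (n + 1), w i = X (a + i)) →
      dd h f n w = ddN (fun j => eh h (X j)) (fun j => f (X j)) a n := by
  intro n
  induction n with
  | zero =>
    intro a w hw
    have := hw 0
    simp only [Fin.val_zero, Nat.add_zero] at this
    simp [dd, ddN, this]
  | succ n ih =>
    intro a w hw
    rw [dd]
    rw [ih (a + 1) (fun i => w i.succ) (fun i => by
        show w i.succ = X (a + 1 + ↑i)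
        rw [hw i.succ]; congr 1; simp only [Fin.val_succ]; omega),
      ih a (fun i => w i.castSucc) (fun i => by
        show w i.castSucc = X (a + ↑i)
        rw [hw i.castSucc]; congr 1),
      ddN_succ, hw (Fin.last (n + 1)), hw 0,
      show a + ↑(Fin.last (n + 1)) = a + n + 1 from by simp only [Fin.val_last]; omega,
      show a + ↑(0 : Fin (n + 2)) = a from by simp]

theorem dd_leibniz (h : ℝ) (hh : -1 < h) (hne : h ≠ 0) (m : ℕ) (x : Fin (m + 1) → ℝ)
    (hdist : Function.Injective fun j => eh h (x j)) (f g : ℝ → ℂ) :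
    dd h (fun t => f t * g t) m x =
      ∑ k : Fin (m + 1),
        dd h f k (fun i : Fin (k + 1) => x (Fin.castLE (by omega) i)) *
        dd h g (m - k) (fun i : Fin ((m - (k : ℕ)) + 1) => x ⟨k + i, by omega⟩) := by
  set X : ℕ → ℝ := fun j => if hj : j < m + 1 then x ⟨j, hj⟩ else x 0 with hX
  set y : ℕ → ℂ := fun j => eh h (X j) with hy
  have hXeq : ∀ (j : ℕ) (hj : j < m + 1), X j = x ⟨j, hj⟩ := by
    intro j hj; simp [hX, hj, Nat.lt_succ_iff.mp hj]
  have hyinj : ∀ i j, 0 ≤ i → i < j → j ≤ 0 + m → y i ≠ y j := by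
    intro i j _ hij hjm heq
    have hi : i < m + 1 := by omega
    have hj : j < m + 1 := by omega
    rw [hy] at heq
    simp only [hXeq i hi, hXeq j hj] at heq
    have := hdist heq
    simp only [Fin.mk.injEq] at this
    omega
  have hL : dd h (fun t => f t * g t) m x
      = ddN y (fun j => f (X j) * g (X j)) 0 m := by
    apply dd_eq_ddN h (fun t => f t * g t) X m 0 x
    intro i
    rw [Nat.zero_add, hXeq i i.isLt]
  have hF : ∀ k : Fin (m + 1),
      dd h f k (fun i : Fin (k + 1) => x (Fin.castLE (by omega) i))
        = ddN y (fun j => f (X j)) 0 k := by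
    intro k
    apply dd_eq_ddN h f X k 0
    intro i
    have hi : (i : ℕ) < m + 1 := by omega
    rw [Nat.zero_add, hXeq i hi]
    congr 1
  have hG : ∀ k : Fin (m + 1),
      dd h g (m - k) (fun i : Fin ((m - (k : ℕ)) + 1) => x ⟨k + i, by omega⟩)
        = ddN y (fun j => g (X j)) k (m - k) := by
    intro k
    apply dd_eq_ddN h g X (m - k) k
    intro i
    have hi : (k : ℕ) + i < m + 1 := by omega
    rw [hXeq _ hi]
  calc dd h (fun t => f t * g t) m x
      = ddN y (fun j => f (X j) * g (X j)) 0 m := hL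
    _ = ∑ k ∈ Finset.range (m + 1),
          ddN y (fun j => f (X j)) 0 k * ddN y (fun j => g (X j)) (0 + k) (m - k) :=
        ddN_leibniz y (fun j => f (X j)) (fun j => g (X j)) m 0 hyinj
    _ = ∑ k : Fin (m + 1),
          dd h f k (fun i : Fin (k + 1) => x (Fin.castLE (by omega) i)) *
          dd h g (m - k) (fun i : Fin ((m - (k : ℕ)) + 1) => x ⟨k + i, by omega⟩) := by
        rw [← Fin.sum_univ_eq_sum_range
          (fun k => ddN y (fun j => f (X j)) 0 k * ddN y (fun j => g (X j)) (0 + k) (m - k))]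
        refine Finset.sum_congr rfl ?_
        intro k _
        rw [hF k, hG k, Nat.zero_add]
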